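/- Let H be a real inner product space, let B : H × H → ℝ be a symmetric bilinear form which is positive semidefinite (B(x,x) ≥ 0 for all x ∈ H), let T ⊆ H be a linear subspace on which B vanishes (B(h,h) = 0 for all h ∈ T), let W ⊆ H be a subset, and let C > 0 be a constant such that B(g,g) ≥ C·‖g‖² for all g ∈ W. Then for every f ∈ H that is orthogonal to T (i.e. ⟨f,h⟩ = 0 for all h ∈ T) and that admits a decomposition f = g + h with g ∈ W and h ∈ T, one has B(f,f) ≥ C·‖f‖². -/
import Mathlib


open scoped RealInnerProductSpace

/-- **Change of orthogonality lemma.** If a positive semidefinite symmetric bilinear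
form `B` on a real inner product space vanishes on a subspace `T` and is coercive
(with constant `C`) on a set `W`, then `B` is coercive with the same constant on every
vector orthogonal to `T` that decomposes as a sum of an element of `W` and an element
of `T`. -/
theorem change_of_orthogonality
    {H : Type*} [NormedAddCommGroup H] [InnerProductSpace ℝ H]
    (B : H →ₗ[ℝ] H →ₗ[ℝ] ℝ)
    (hsym : ∀ x y : H, B x y = B y x)
    (hpsd : ∀ x : H, 0 ≤ B x x)
    (T : Submodule ℝ H)
    (hT : ∀ h ∈ T, B h h = 0)
    (W : Set H) (C : ℝ) (hC : 0 < C)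
    (hW : ∀ g ∈ W, C * ‖g‖ ^ 2 ≤ B g g)
    (f : H) (hf : ∀ h ∈ T, ⟪f, h⟫ = 0)
    (g h : H) (hg : g ∈ W) (hh : h ∈ T) (hfgh : f = g + h) :
    C * ‖f‖ ^ 2 ≤ B f f := by
  have hBh : B h h = 0 := hT h hh
  -- B g h = 0 by positive semidefiniteness
  have hgh : B g h = 0 := by
    by_contra ha
    set a := B g h with ha'
    have key : ∀ t : ℝ, 0 ≤ B g g + 2 * t * a := by
      intro t
      have := hpsd (g + t • h)
      have hexp : B (g + t • h) (g + t • h) = B g g + 2 * t * a := by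
        simp only [map_add, map_smul, LinearMap.add_apply, LinearMap.smul_apply,
          smul_eq_mul, hBh, hsym h g, ← ha']
        ring
      linarith [hexp ▸ this]
    have := key (-(B g g + 1) / (2 * a))
    have h2a : 2 * a ≠ 0 := by simpa using ha
    have : 0 ≤ B g g + (-(B g g + 1) / (2 * a)) * (2 * a) := by linarith [key (-(B g g + 1) / (2 * a))]
    rw [div_mul_cancel₀ _ h2a] at this
    linarith
  -- hence B f f = B g g
  have hBf : B f f = B g g := by
    rw [hfgh]
    simp only [map_add, LinearMap.add_apply, hBh, hgh, hsym h g]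
    linarith [hgh]
  -- ‖f‖ ≤ ‖g‖
  have hfh : ⟪f, h⟫ = 0 := hf h hh
  have hnf : ‖f‖ ^ 2 = ⟪f, g⟫ := by
    have : ⟪f, f⟫ = ⟪f, g⟫ + ⟪f, h⟫ := by rw [hfgh]; exact inner_add_right _ _ _
    rw [← real_inner_self_eq_norm_sq]
    rw [this, hfh, add_zero]
  have hcs : ⟪f, g⟫ ≤ ‖f‖ * ‖g‖ := real_inner_le_norm f g
  have hle : ‖f‖ ^ 2 ≤ ‖g‖ ^ 2 := by nlinarith [sq_nonneg (‖f‖ - ‖g‖)]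
  calc C * ‖f‖ ^ 2 ≤ C * ‖g‖ ^ 2 := by nlinarith
    _ ≤ B g g := hW g hg
    _ = B f f := hBf.symm
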